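/- Let n ≥ 1 and k ∈ {1,…,n}. Let σ_k : {1,…,n} → {1,…,n+1} be given by σ_k(i) = i for i ≤ k and σ_k(i) = i+1 for i ≥ k+1, and let Σ_k : ℝ^{2^n} → ℝ^{2^{n+1}} be the injective linear map defined by (Σ_k a)_{σ_k(S)} = a_S for every S ⊆ {1,…,n} and (Σ_k a)_T = 0 for every T ⊆ {1,…,n+1} not of the form σ_k(S). Then Σ_k(K_{n+1}) is a face of K_{n+2}: Σ_k(K_{n+1}) ⊆ K_{n+2}, and whenever x, y ∈ K_{n+2} satisfy x + y ∈ Σ_k(K_{n+1}), both x and y lie in Σ_k(K_{n+1}). Consequently, a ∈ K_{n+1} if and only if Σ_k(a) ∈ K_{n+2}, and a is an extreme ray of K_{n+1} if and only if Σ_k(a) is an extreme ray of K_{n+2}. -/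

import Mathlib

/-- A graded poset: a finite poset with a least element `bot`, a greatest element `top`,
and a rank function that is `0` at `bot` and increases by one along covering relations. -/
structure GradedPoset where
  carrier : Type
  [fintypeCarrier : Fintype carrier]
  [partialOrderCarrier : PartialOrder carrier]
  bot : carrier
  top : carrier
  bot_le : ∀ x : carrier, bot ≤ x
  le_top : ∀ x : carrier, x ≤ top
  rank : carrier → ℕ
  rank_bot : rank bot = 0
  rank_covBy : ∀ x y : carrier, x ⋖ y → rank y = rank x + 1

attribute [instance] GradedPoset.fintypeCarrier GradedPoset.partialOrderCarrier

/-- The flag number `f_S(P)`: the number of chains in `P` whose set of ranks is `S`. -/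
noncomputable def flagNum (P : GradedPoset) (S : Finset ℕ) : ℕ :=
  Set.ncard {c : Finset P.carrier |
    IsChain (· ≤ ·) (↑c : Set P.carrier) ∧ c.image P.rank = S}

/-- The cone `K_r` of all linear inequalities valid on flag `f`-vectors of graded posets
of rank `r`, modelled inside `Finset ℕ → ℝ` as the functions supported on subsets of
`{1,…,r-1}` whose associated functional is nonnegative on all graded posets of rank `r`. -/
def coneK (r : ℕ) : Set (Finset ℕ → ℝ) :=
  {a | (∀ S : Finset ℕ, ¬ S ⊆ Finset.Icc 1 (r - 1) → a S = 0) ∧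
    ∀ P : GradedPoset, P.rank P.top = r →
      0 ≤ ∑ S ∈ (Finset.Icc 1 (r - 1)).powerset, a S * (flagNum P S : ℝ)}

/-- The vector `e_∅` with coordinate `1` at `∅` and `0` elsewhere
(corresponding to the chain operator `f_∅`). -/
noncomputable def eEmpty : Finset ℕ → ℝ := fun S => if S = ∅ then 1 else 0

/-- `F` is an extreme ray of the cone `K`: `F` is a nonzero element of `K` such that
whenever `F = G + H` with `G, H ∈ K`, both `G` and `H` are nonnegative multiples of `F`. -/
def IsExtremeRay (K : Set (Finset ℕ → ℝ)) (F : Finset ℕ → ℝ) : Prop :=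
  F ∈ K ∧ F ≠ 0 ∧
    ∀ G H : Finset ℕ → ℝ, G ∈ K → H ∈ K → F = G + H →
      (∃ c : ℝ, 0 ≤ c ∧ G = c • F) ∧ ∃ c : ℝ, 0 ≤ c ∧ H = c • F

/-- The lifting map `Σ_k : ℝ^{2^n} → ℝ^{2^{n+1}}` induced by the shift
`σ_k(i) = i` for `i ≤ k`, `σ_k(i) = i + 1` for `i ≥ k + 1`:
`(Σ_k a)_{σ_k(S)} = a_S` for `S ⊆ {1,…,n}` and `(Σ_k a)_T = 0` for `T` not of the
form `σ_k(S)` (i.e. `T ⊄ {1,…,n+1}` or `k + 1 ∈ T`). -/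
noncomputable def lift (n k : ℕ) (a : Finset ℕ → ℝ) : Finset ℕ → ℝ := fun T =>
  if T ⊆ Finset.Icc 1 (n + 1) ∧ k + 1 ∉ T then
    a (T.image (fun i => if i ≤ k then i else i - 1))
  else 0



lemma inversion (M : Finset ℕ) (z : Finset ℕ → ℝ)
    (hsum : ∀ S ∈ M.powerset, ∑ T ∈ M.powerset, z T * 2 ^ (T ∩ S).card = 0) :
    ∀ T ∈ M.powerset, z T = 0 := by
  classical
  -- step A
  have stepA : ∀ S ∈ M.powerset,
      ∑ R ∈ S.powerset, (∑ T ∈ M.powerset.filter (fun T => R ⊆ T), z T) =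
      ∑ T ∈ M.powerset, z T * 2 ^ (T ∩ S).card := by
    intro S _
    have hswap : ∀ R : Finset ℕ, ∑ T ∈ M.powerset.filter (fun T => R ⊆ T), z T =
        ∑ T ∈ M.powerset, if R ⊆ T then z T else 0 := fun R => Finset.sum_filter _ _
    simp only [hswap]
    rw [Finset.sum_comm]
    refine Finset.sum_congr rfl fun T _ => ?_
    rw [← Finset.sum_filter, Finset.sum_const]
    have hfil : S.powerset.filter (fun R => R ⊆ T) = (S ∩ T).powerset := by
      ext R
      rw [Finset.mem_filter, Finset.mem_powerset, Finset.mem_powerset, Finset.subset_inter_iff]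
    rw [hfil, Finset.card_powerset, Finset.inter_comm S T, nsmul_eq_mul, mul_comm]
    push_cast
    ring
  -- step B
  have stepB : ∀ S, S ⊆ M → ∑ T ∈ M.powerset.filter (fun T => S ⊆ T), z T = 0 := by
    intro S
    induction S using Finset.strongInduction with
    | _ S ih =>
      intro hSM
      have h0 : ∑ R ∈ S.powerset, (∑ T ∈ M.powerset.filter (fun T => R ⊆ T), z T) = 0 := by
        rw [stepA S (Finset.mem_powerset.2 hSM)]
        exact hsum S (Finset.mem_powerset.2 hSM)
      have hrest : ∑ R ∈ S.powerset.erase S,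
          (∑ T ∈ M.powerset.filter (fun T => R ⊆ T), z T) = 0 := by
        refine Finset.sum_eq_zero fun R hR => ?_
        have hR1 := Finset.mem_of_mem_erase hR
        have hR2 := Finset.ne_of_mem_erase hR
        exact ih R (Finset.ssubset_iff_subset_ne.2 ⟨Finset.mem_powerset.1 hR1, hR2⟩)
          ((Finset.mem_powerset.1 hR1).trans hSM)
      have hsplit := Finset.add_sum_erase S.powerset
        (fun R => ∑ T ∈ M.powerset.filter (fun T => R ⊆ T), z T) (Finset.mem_powerset_self S)
      rw [← hsplit, hrest, add_zero] at h0
      exact h0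
  -- step C
  have stepC : ∀ d : ℕ, ∀ T, T ⊆ M → M.card - T.card = d → z T = 0 := by
    intro d
    induction d using Nat.strong_induction_on with
    | _ d ih =>
      intro T hTM hd
      have hT0 := stepB T hTM
      have hmem : T ∈ M.powerset.filter (fun T' => T ⊆ T') :=
        Finset.mem_filter.2 ⟨Finset.mem_powerset.2 hTM, Finset.Subset.refl T⟩
      have hrest : ∑ T' ∈ (M.powerset.filter (fun T' => T ⊆ T')).erase T, z T' = 0 := by
        refine Finset.sum_eq_zero fun T' hT' => ?_
        have h1 := Finset.mem_of_mem_erase hT'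
        have h2 := Finset.ne_of_mem_erase hT'
        rw [Finset.mem_filter, Finset.mem_powerset] at h1
        have hcard : T.card < T'.card :=
          Finset.card_lt_card (Finset.ssubset_iff_subset_ne.2 ⟨h1.2, h2.symm⟩)
        have hcard2 : T'.card ≤ M.card := Finset.card_le_card h1.1
        have hcard3 : T.card ≤ M.card := Finset.card_le_card hTM
        exact ih (M.card - T'.card) (by omega) T' h1.1 rfl
      have hsplit := Finset.add_sum_erase (M.powerset.filter (fun T' => T ⊆ T')) z hmem
      rw [← hsplit, hrest, add_zero] at hT0
      exact hT0
  intro T hT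
  exact stepC (M.card - T.card) T (Finset.mem_powerset.1 hT) rfl


namespace GradedPoset
attribute [local instance] Classical.propDecidable
variable (P : GradedPoset)


lemma exists_covby {x y : P.carrier} (h : x < y) : ∃ z, x ⋖ z ∧ z ≤ y := by
  classical
  have hne : (Finset.univ.filter (fun z => x < z ∧ z ≤ y)).Nonempty :=
    ⟨y, by simp [h]⟩
  obtain ⟨m, hm, hmin⟩ : ∃ m ∈ Finset.univ.filter (fun z => x < z ∧ z ≤ y),
      ∀ w ∈ Finset.univ.filter (fun z => x < z ∧ z ≤ y), ¬ w < m := by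
    obtain ⟨m, hm⟩ := Finset.exists_minimal hne
    exact ⟨m, hm.1, fun w hw hwm => hm.not_lt hw hwm⟩
  simp only [Finset.mem_filter, Finset.mem_univ, true_and] at hm
  refine ⟨m, ⟨hm.1, fun w hxw hwm => ?_⟩, hm.2⟩
  exact hmin w (by simp [hxw, le_trans hwm.le hm.2]) hwm

lemma rank_lt_of_lt {x y : P.carrier} (h : x < y) : P.rank x < P.rank y := by
  revert y
  induction x using WellFoundedGT.induction with
  | _ x ih =>
    intro y h
    obtain ⟨z, hz, hzy⟩ := P.exists_covby h
    have h1 := P.rank_covBy _ _ hz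
    rcases eq_or_lt_of_le hzy with rfl | hlt
    · omega
    · have h2 := ih z hz.lt hlt
      omega

lemma rank_mono {x y : P.carrier} (h : x ≤ y) : P.rank x ≤ P.rank y := by
  rcases eq_or_lt_of_le h with rfl | h
  · exact le_rfl
  · exact (P.rank_lt_of_lt h).le

/-- there is an element of every intermediate rank strictly between -/
lemma exists_rank_between {x y : P.carrier} (h : x < y) {t : ℕ}
    (h1 : P.rank x < t) (h2 : t < P.rank y) : ∃ z, x < z ∧ z < y ∧ P.rank z = t := by
  obtain ⟨d, hd⟩ : ∃ d, t = P.rank x + 1 + d := ⟨t - P.rank x - 1, by omega⟩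
  subst hd
  induction d generalizing x with
  | zero =>
    obtain ⟨z, hz, hzy⟩ := P.exists_covby h
    have h1 := P.rank_covBy _ _ hz
    refine ⟨z, hz.lt, lt_of_le_of_ne hzy ?_, by omega⟩
    rintro rfl; omega
  | succ d ih =>
    obtain ⟨z, hz, hzy⟩ := P.exists_covby h
    have h1 := P.rank_covBy _ _ hz
    have hzylt : z < y := by
      refine lt_of_le_of_ne hzy ?_
      rintro rfl; omega
    obtain ⟨w, hw1, hw2, hw3⟩ := ih hzylt (by omega) (by omega)
    exact ⟨w, lt_trans hz.lt hw1, hw2, by omega⟩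



lemma isChain_image_of {α β : Type*} [Preorder α] [Preorder β] (c : Finset α)
    (hc : IsChain (· ≤ ·) (↑c : Set α)) (f : α → β)
    (hf : ∀ x ∈ c, ∀ y ∈ c, x ≤ y → f x ≤ f y) :
    IsChain (· ≤ ·) (↑(c.image f) : Set β) := by
  intro a ha b hb hab
  simp only [Finset.coe_image, Set.mem_image, Finset.mem_coe] at ha hb
  obtain ⟨x, hx, rfl⟩ := ha
  obtain ⟨y, hy, rfl⟩ := hb
  rcases eq_or_ne x y with rfl | hxy
  · exact absurd rfl hab
  · rcases hc hx hy hxy with h | h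
    · exact Or.inl (hf x hx y hy h)
    · exact Or.inr (hf y hy x hx h)

lemma flagNum_eq_ncard (P : GradedPoset) (S : Finset ℕ) :
    flagNum P S = Nat.card {c : Finset P.carrier //
      IsChain (· ≤ ·) (↑c : Set P.carrier) ∧ c.image P.rank = S} := by
  rw [flagNum, ← Nat.card_coe_set_eq]
  rfl

/-- transfer of flag numbers along a pair of maps -/
lemma flagNum_transfer (P Q : GradedPoset) (S T : Finset ℕ)
    (F : P.carrier → Q.carrier) (G : Q.carrier → P.carrier)
    (h1 : ∀ c : Finset P.carrier, IsChain (· ≤ ·) (↑c : Set P.carrier) → c.image P.rank = S →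
        IsChain (· ≤ ·) (↑(c.image F) : Set Q.carrier) ∧ (c.image F).image Q.rank = T ∧
          (c.image F).image G = c)
    (h2 : ∀ c : Finset Q.carrier, IsChain (· ≤ ·) (↑c : Set Q.carrier) → c.image Q.rank = T →
        IsChain (· ≤ ·) (↑(c.image G) : Set P.carrier) ∧ (c.image G).image P.rank = S ∧
          (c.image G).image F = c) :
    flagNum P S = flagNum Q T := by
  rw [flagNum_eq_ncard, flagNum_eq_ncard]
  refine Nat.card_congr ⟨fun c => ⟨c.1.image F, (h1 c.1 c.2.1 c.2.2).1, (h1 c.1 c.2.1 c.2.2).2.1⟩,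
    fun c => ⟨c.1.image G, (h2 c.1 c.2.1 c.2.2).1, (h2 c.1 c.2.1 c.2.2).2.1⟩, ?_, ?_⟩
  · rintro ⟨c, hc1, hc2⟩
    exact Subtype.ext (h1 c hc1 hc2).2.2
  · rintro ⟨c, hc1, hc2⟩
    exact Subtype.ext (h2 c hc1 hc2).2.2




lemma chain_rank_unique (P : GradedPoset) {c : Finset P.carrier}
    (hc : IsChain (· ≤ ·) (↑c : Set P.carrier)) {x y : P.carrier} (hx : x ∈ c) (hy : y ∈ c)
    (h : P.rank x = P.rank y) : x = y := by
  by_contra hne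
  rcases hc (Finset.mem_coe.2 hx) (Finset.mem_coe.2 hy) hne with hle | hle
  · have := P.rank_lt_of_lt (lt_of_le_of_ne hle hne)
    omega
  · have := P.rank_lt_of_lt (lt_of_le_of_ne hle (Ne.symm hne))
    omega

def sigmaF (k : ℕ) : ℕ → ℕ := fun i => if i ≤ k then i else i + 1
def tauF (k : ℕ) : ℕ → ℕ := fun i => if i ≤ k then i else i - 1

lemma tau_sigma (k i : ℕ) : tauF k (sigmaF k i) = i := by
  simp only [sigmaF, tauF]; split <;> simp <;> omega
lemma sigma_tau (k : ℕ) {i : ℕ} (h : i ≠ k + 1) : sigmaF k (tauF k i) = i := by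
  simp only [sigmaF, tauF]; split <;> [skip; split] <;> omega
lemma sigma_ne (k i : ℕ) : sigmaF k i ≠ k + 1 := by
  simp only [sigmaF]; split <;> omega
lemma sigma_inj (k : ℕ) : Function.Injective (sigmaF k) := by
  intro a b; simp only [sigmaF]; split <;> split <;> omega

/-- delete the level of rank `k+1` from a graded poset -/
@[reducible] def Del (P : GradedPoset) (k : ℕ) (htop : P.rank P.top ≠ k + 1) : GradedPoset where
  carrier := {x : P.carrier // P.rank x ≠ k + 1}
  bot := ⟨P.bot, by simp [P.rank_bot]⟩
  top := ⟨P.top, htop⟩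
  bot_le := fun x => P.bot_le x.1
  le_top := fun x => P.le_top x.1
  rank := fun x => if P.rank x.1 ≤ k then P.rank x.1 else P.rank x.1 - 1
  rank_bot := by simp [P.rank_bot]
  rank_covBy := by
    rintro ⟨x, hx⟩ ⟨y, hy⟩ hcov
    have hlt : x < y := hcov.lt
    have hr : P.rank x < P.rank y := P.rank_lt_of_lt hlt
    have key : P.rank y = P.rank x + 1 ∨ (P.rank x = k ∧ P.rank y = k + 2) := by
      by_contra hcon
      push_neg at hcon
      obtain ⟨t, ht1, ht2, ht3⟩ : ∃ t, P.rank x < t ∧ t < P.rank y ∧ t ≠ k + 1 := by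
        by_cases h1 : P.rank x + 1 = k + 1
        · exact ⟨k + 2, by omega, by omega, by omega⟩
        · exact ⟨P.rank x + 1, by omega, by omega, h1⟩
      obtain ⟨z, hz1, hz2, hz3⟩ := P.exists_rank_between hlt ht1 ht2
      exact hcov.2 (show (⟨x, hx⟩ : {x // P.rank x ≠ k+1}) < ⟨z, hz3 ▸ ht3⟩ from hz1)
        (show (⟨z, hz3 ▸ ht3⟩ : {x // P.rank x ≠ k+1}) < ⟨y, hy⟩ from hz2)
    rcases key with h | ⟨h1, h2⟩
    · simp only [h]
      split <;> split <;> omega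
    · simp only [h1, h2]
      split <;> split <;> omega

lemma rank_Del (P : GradedPoset) (k : ℕ) (htop : P.rank P.top ≠ k + 1)
    (x : (Del P k htop).carrier) : P.rank x.1 = sigmaF k ((Del P k htop).rank x) := by
  have hx := x.2
  simp only [Del, sigmaF]
  split_ifs <;> omega

lemma flag_Del (P : GradedPoset) (k : ℕ) (htop : P.rank P.top ≠ k + 1) (S : Finset ℕ) :
    flagNum P (S.image (sigmaF k)) = flagNum (Del P k htop) S := by
  refine (flagNum_transfer (Del P k htop) P S (S.image (sigmaF k)) Subtype.val
      (fun e => if h : P.rank e ≠ k + 1 then ⟨e, h⟩ else ⟨P.bot, by simp [P.rank_bot]⟩)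
      ?_ ?_).symm
  · intro c hc hrank
    refine ⟨isChain_image_of c hc _ (fun x _ y _ h => h), ?_, ?_⟩
    · rw [Finset.image_image, ← hrank, Finset.image_image]
      exact Finset.image_congr (fun x _ => rank_Del P k htop x)
    · simp only [Finset.image_image]
      have h0 : ∀ x ∈ c, ((fun e => if h : P.rank e ≠ k + 1 then (⟨e, h⟩ : {x // P.rank x ≠ k+1})
          else ⟨P.bot, by simp [P.rank_bot]⟩) ∘ Subtype.val) x = id x := by
        intro x _
        show (if h : P.rank x.1 ≠ k + 1 then (⟨x.1, h⟩ : {x // P.rank x ≠ k+1})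
          else ⟨P.bot, by simp [P.rank_bot]⟩) = x
        rw [dif_pos x.2]
      ext a
      simp only [Finset.mem_image, Function.comp_apply]
      constructor
      · rintro ⟨x, hx, rfl⟩
        rw [dif_pos x.2]
        exact hx
      · intro ha
        refine ⟨a, ha, ?_⟩
        rw [dif_pos a.2]
  · intro c hc hrank
    have hmem : ∀ e ∈ c, P.rank e ≠ k + 1 := by
      intro e he
      have : P.rank e ∈ S.image (sigmaF k) := hrank ▸ Finset.mem_image_of_mem _ he
      obtain ⟨i, _, hi⟩ := Finset.mem_image.1 this
      exact hi ▸ sigma_ne k i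
    set G := fun e => if h : P.rank e ≠ k + 1 then (⟨e, h⟩ : {x // P.rank x ≠ k+1})
        else ⟨P.bot, by simp [P.rank_bot]⟩ with hG
    refine ⟨isChain_image_of c hc G ?_, ?_, ?_⟩
    · intro x hx y hy hxy
      simp only [hG, dif_pos (hmem x hx), dif_pos (hmem y hy)]
      exact hxy
    · simp only [Finset.image_image]
      have : ∀ e ∈ c, ((Del P k htop).rank ∘ G) e = (tauF k ∘ P.rank) e := by
        intro e he
        simp only [hG, Function.comp, dif_pos (hmem e he), Del, tauF]
      rw [Finset.image_congr this, ← Finset.image_image, hrank, Finset.image_image]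
      have : ∀ i ∈ S, (tauF k ∘ sigmaF k) i = id i := fun i _ => tau_sigma k i
      rw [Finset.image_congr this, Finset.image_id]
    · simp only [Finset.image_image]
      have : ∀ e ∈ c, (Subtype.val ∘ G) e = id e := by
        intro e he
        simp only [hG, Function.comp, dif_pos (hmem e he), id]
      rw [Finset.image_congr this, Finset.image_id]



-- ### Dup construction
variable (Q : GradedPoset) (k : ℕ)

structure DupC (Q : GradedPoset) (k : ℕ) : Type where
  s : Q.carrier ⊕ {u : Q.carrier // Q.rank u = k}

instance : Fintype (DupC Q k) :=
  Fintype.ofEquiv (Q.carrier ⊕ {u : Q.carrier // Q.rank u = k})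
    ⟨DupC.mk, DupC.s, fun _ => rfl, fun _ => rfl⟩

/-- inl into DupC -/
def dl (x : Q.carrier) : DupC Q k := ⟨Sum.inl x⟩
/-- inr into DupC -/
def dr (u : {u : Q.carrier // Q.rank u = k}) : DupC Q k := ⟨Sum.inr u⟩

def dupLe : DupC Q k → DupC Q k → Prop := fun p q =>
  match p.s, q.s with
  | .inl x, .inl y => x ≤ y
  | .inl x, .inr u => x ≤ u.1
  | .inr u, .inl y => u.1 < y
  | .inr u, .inr v => u = v

instance : PartialOrder (DupC Q k) where
  le := dupLe Q k
  le_refl := by rintro ⟨x | u⟩ <;> simp [dupLe]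
  le_trans := by
    rintro ⟨x|u⟩ ⟨y|v⟩ ⟨z|w⟩ h1 h2
    · exact le_trans h1 h2
    · exact le_trans h1 h2
    · exact le_trans (h1 : x ≤ v.1) (le_of_lt h2)
    · exact (h2 : v = w) ▸ (h1 : x ≤ v.1)
    · exact lt_of_lt_of_le (h1 : u.1 < y) h2
    · exfalso
      have hr := Q.rank_lt_of_lt (lt_of_lt_of_le (h1 : u.1 < y) (h2 : y ≤ w.1))
      rw [u.2, w.2] at hr
      omega
    · exact (h1 : u = v) ▸ (h2 : v.1 < z)
    · exact Eq.trans (h1 : u = v) (h2 : v = w)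
  le_antisymm := by
    rintro ⟨x|u⟩ ⟨y|v⟩ h1 h2
    · exact congrArg (fun t => (⟨Sum.inl t⟩ : DupC Q k)) (le_antisymm h1 h2)
    · exact absurd (h2 : v.1 < x) (not_lt_of_ge h1)
    · exact absurd (h1 : u.1 < y) (not_lt_of_ge h2)
    · exact congrArg (fun t => (⟨Sum.inr t⟩ : DupC Q k)) (h1 : u = v)

lemma dup_lt_inl_inl {x y : Q.carrier} : dl Q k x < dl Q k y ↔ x < y := by
  rw [lt_iff_le_not_ge, lt_iff_le_not_ge]
  exact ⟨fun h => ⟨h.1, h.2⟩, fun h => ⟨h.1, h.2⟩⟩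
lemma dup_lt_inl_inr {x : Q.carrier} {u : {u : Q.carrier // Q.rank u = k}} :
    dl Q k x < dr Q k u ↔ x ≤ u.1 := by
  rw [lt_iff_le_not_ge]
  exact ⟨fun h => h.1, fun h => ⟨h, not_lt_of_ge h⟩⟩
lemma dup_lt_inr_inl {y : Q.carrier} {u : {u : Q.carrier // Q.rank u = k}} :
    dr Q k u < dl Q k y ↔ u.1 < y := by
  rw [lt_iff_le_not_ge]
  exact ⟨fun h => h.1, fun h => ⟨h, fun h' => absurd h (not_lt_of_ge (h' : y ≤ u.1))⟩⟩
lemma dup_not_lt_inr_inr {u v : {u : Q.carrier // Q.rank u = k}} :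
    ¬ dr Q k u < dr Q k v := by
  rw [lt_iff_le_not_ge]
  rintro ⟨h1, h2⟩
  exact h2 ((h1 : u = v) ▸ rfl)

@[reducible] def Dup (hktop : k < Q.rank Q.top) : GradedPoset where
  carrier := DupC Q k
  bot := dl Q k Q.bot
  top := dl Q k Q.top
  bot_le := by
    rintro ⟨x | u⟩
    · exact Q.bot_le x
    · exact Q.bot_le u.1
  le_top := by
    rintro ⟨x | u⟩
    · exact Q.le_top x
    · show u.1 < Q.top
      refine lt_of_le_of_ne (Q.le_top u.1) (fun h => ?_)
      rw [← h] at hktop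
      have := u.2
      omega
  rank := fun p => match p.s with
    | .inl x => sigmaF k (Q.rank x)
    | .inr _ => k + 1
  rank_bot := by simp [Q.rank_bot, sigmaF, dl]
  rank_covBy := by
    rintro ⟨x|u⟩ ⟨y|v⟩ hcov
    · have hlt : x < y := (dup_lt_inl_inl Q k).1 hcov.lt
      have hcovQ : x ⋖ y := by
        refine ⟨hlt, fun z h1 h2 => ?_⟩
        exact hcov.2 ((dup_lt_inl_inl Q k).2 h1) ((dup_lt_inl_inl Q k).2 h2)
      have hrank := Q.rank_covBy _ _ hcovQ
      have hnk : Q.rank x ≠ k := by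
        intro hxk
        exact hcov.2 ((dup_lt_inl_inr Q k (u := ⟨x, hxk⟩)).2 (le_refl x))
          ((dup_lt_inr_inl Q k (u := ⟨x, hxk⟩)).2 hlt)
      show sigmaF k (Q.rank y) = sigmaF k (Q.rank x) + 1
      rw [hrank]
      simp only [sigmaF]
      split <;> split <;> omega
    · have hle : x ≤ v.1 := (dup_lt_inl_inr Q k).1 hcov.lt
      have hx : x = v.1 := by
        by_contra hne
        exact hcov.2 ((dup_lt_inl_inl Q k).2 (lt_of_le_of_ne hle hne))
          ((dup_lt_inl_inr Q k).2 (le_refl v.1))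
      show k + 1 = sigmaF k (Q.rank x) + 1
      rw [hx, v.2]
      simp [sigmaF]
    · have hlt : u.1 < y := (dup_lt_inr_inl Q k).1 hcov.lt
      have hcovQ : u.1 ⋖ y := by
        refine ⟨hlt, fun z h1 h2 => ?_⟩
        exact hcov.2 ((dup_lt_inr_inl Q k).2 h1) ((dup_lt_inl_inl Q k).2 h2)
      have hrank := Q.rank_covBy _ _ hcovQ
      show sigmaF k (Q.rank y) = k + 1 + 1
      rw [hrank, u.2]
      simp [sigmaF]
    · exact absurd hcov.lt (dup_not_lt_inr_inr Q k)

lemma rank_Dup_top (hktop : k < Q.rank Q.top) :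
    (Dup Q k hktop).rank (Dup Q k hktop).top = Q.rank Q.top + 1 := by
  show sigmaF k (Q.rank Q.top) = Q.rank Q.top + 1
  simp only [sigmaF]
  split <;> omega

def dupG : DupC Q k → Q.carrier := fun p =>
  match p.s with
  | .inl x => x
  | .inr u => u.1

lemma flag_Dup (hktop : k < Q.rank Q.top) (S : Finset ℕ) :
    flagNum Q S = flagNum (Dup Q k hktop) (S.image (sigmaF k)) := by
  refine flagNum_transfer Q (Dup Q k hktop) S (S.image (sigmaF k))
    (dl Q k) (dupG Q k) ?_ ?_
  · intro c hc hrank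
    refine ⟨isChain_image_of c hc _ (fun x _ y _ h => h), ?_, ?_⟩
    · rw [Finset.image_image, ← hrank, Finset.image_image]
      rfl
    · rw [Finset.image_image]
      have h0 : ∀ x ∈ c, (dupG Q k ∘ dl Q k) x = id x := fun x _ => rfl
      rw [Finset.image_congr h0, Finset.image_id]
  · intro c hc hrank
    have hmem : ∀ p ∈ c, ∃ x : Q.carrier, p = dl Q k x := by
      rintro ⟨x | u⟩ hp
      · exact ⟨x, rfl⟩
      · exfalso
        have : (Dup Q k hktop).rank ⟨Sum.inr u⟩ ∈ S.image (sigmaF k) :=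
          hrank ▸ Finset.mem_image_of_mem _ hp
        obtain ⟨i, _, hi⟩ := Finset.mem_image.1 this
        exact sigma_ne k i hi
    refine ⟨isChain_image_of c hc _ ?_, ?_, ?_⟩
    · rintro ⟨x|u⟩ _ ⟨y|v⟩ _ h
      · exact h
      · exact h
      · exact le_of_lt (h : u.1 < y)
      · exact le_of_eq (congrArg Subtype.val (h : u = v))
    · apply Finset.image_injective (sigma_inj k)
      rw [Finset.image_image, ← hrank, Finset.image_image]
      refine Finset.image_congr ?_
      intro p hp
      obtain ⟨x, rfl⟩ := hmem p hp
      rfl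
    · rw [Finset.image_image]
      refine Finset.ext fun p => ?_
      simp only [Finset.mem_image, Function.comp_apply]
      constructor
      · rintro ⟨q, hq, rfl⟩
        obtain ⟨x, rfl⟩ := hmem q hq
        exact hq
      · intro hp
        obtain ⟨x, rfl⟩ := hmem p hp
        exact ⟨dl Q k x, hp, rfl⟩



-- generic projection order
section Proj
variable {α β : Type*} [Preorder β] (f : α → β)

def projPO : PartialOrder α where
  le p q := f p < f q ∨ p = q
  le_refl p := Or.inr rfl
  le_trans p q r h1 h2 := by
    rcases h1 with h1 | rfl
    · rcases h2 with h2 | rfl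
      · exact Or.inl (h1.trans h2)
      · exact Or.inl h1
    · exact h2
  le_antisymm p q h1 h2 := by
    rcases h1 with h1 | rfl
    · rcases h2 with h2 | rfl
      · exact absurd (h1.trans h2) (lt_irrefl _)
      · rfl
    · rfl

lemma projPO_lt_iff (p q : α) :
    (projPO f).lt p q ↔ f p < f q := by
  show ((f p < f q ∨ p = q) ∧ ¬ (f q < f p ∨ q = p)) ↔ _
  constructor
  · rintro ⟨h1 | rfl, h2⟩
    · exact h1
    · exact absurd (Or.inr rfl) h2
  · intro h
    refine ⟨Or.inl h, ?_⟩
    rintro (h' | rfl)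
    · exact absurd (h.trans h') (lt_irrefl _)
    · exact absurd h (lt_irrefl _)
end Proj

-- ### inflation of the level of rank k+1, (m+1)-fold
variable (P : GradedPoset) (k m : ℕ)

structure InflC (P : GradedPoset) (k m : ℕ) : Type where
  s : {p : P.carrier × Fin (m + 1) // P.rank p.1 = k + 1 ∨ p.2 = 0}

instance : Fintype (InflC P k m) :=
  Fintype.ofEquiv {p : P.carrier × Fin (m + 1) // P.rank p.1 = k + 1 ∨ p.2 = 0}
    ⟨InflC.mk, InflC.s, fun _ => rfl, fun _ => rfl⟩

def inflProj : InflC P k m → P.carrier := fun q => q.s.1.1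

instance : PartialOrder (InflC P k m) := projPO (inflProj P k m)

lemma infl_lt_iff (p q : InflC P k m) : p < q ↔ inflProj P k m p < inflProj P k m q :=
  projPO_lt_iff (inflProj P k m) p q

lemma infl_ext {p q : InflC P k m} (h1 : p.s.1.1 = q.s.1.1) (h2 : p.s.1.2 = q.s.1.2) : p = q := by
  cases p; cases q
  congr 1
  exact Subtype.ext (Prod.ext h1 h2)

@[reducible] def Infl (htop : P.rank P.top ≠ k + 1) : GradedPoset where
  carrier := InflC P k m
  bot := ⟨⟨(P.bot, 0), Or.inr rfl⟩⟩
  top := ⟨⟨(P.top, 0), Or.inr rfl⟩⟩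
  bot_le q := by
    rcases eq_or_lt_of_le (P.bot_le q.s.1.1) with h | h
    · refine Or.inr (infl_ext P k m h ?_)
      rcases q.s.2 with h2 | h2
      · rw [← h, P.rank_bot] at h2
        omega
      · exact h2.symm
    · exact Or.inl h
  le_top q := by
    rcases eq_or_lt_of_le (P.le_top q.s.1.1) with h | h
    · refine Or.inr (infl_ext P k m ?_ ?_)
      · exact h
      rcases q.s.2 with h2 | h2
      · rw [h] at h2
        exact absurd h2 htop
      · exact h2
    · exact Or.inl h
  rank q := P.rank q.s.1.1
  rank_bot := P.rank_bot
  rank_covBy := by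
    intro p q hcov
    have hlt : p.s.1.1 < q.s.1.1 := (infl_lt_iff P k m p q).1 hcov.lt
    have hcovP : p.s.1.1 ⋖ q.s.1.1 := by
      refine ⟨hlt, fun z h1 h2 => ?_⟩
      exact hcov.2 ((infl_lt_iff P k m p ⟨⟨(z, 0), Or.inr rfl⟩⟩).2 h1)
        ((infl_lt_iff P k m ⟨⟨(z, 0), Or.inr rfl⟩⟩ q).2 h2)
    exact P.rank_covBy _ _ hcovP

lemma rank_Infl_top (htop : P.rank P.top ≠ k + 1) :
    (Infl P k m htop).rank (Infl P k m htop).top = P.rank P.top := rfl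

/-- flag numbers not involving rank k+1 are unchanged -/
lemma flag_Infl_not_mem (htop : P.rank P.top ≠ k + 1) (T : Finset ℕ) (hT : k + 1 ∉ T) :
    flagNum P T = flagNum (Infl P k m htop) T := by
  refine flagNum_transfer P (Infl P k m htop) T T
    (fun x => ⟨⟨(x, 0), Or.inr rfl⟩⟩) (inflProj P k m) ?_ ?_
  · intro c hc hrank
    refine ⟨isChain_image_of c hc _ ?_, ?_, ?_⟩
    · intro x _ y _ h
      rcases eq_or_lt_of_le h with rfl | h
      · exact le_refl _
      · exact Or.inl h
    · rw [Finset.image_image, ← hrank]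
      rfl
    · rw [Finset.image_image]
      have h0 : ∀ x ∈ c, ((inflProj P k m) ∘ (fun x => (⟨⟨(x, 0), Or.inr rfl⟩⟩ : InflC P k m))) x
          = id x := fun x _ => rfl
      rw [Finset.image_congr h0, Finset.image_id]
  · intro c hc hrank
    have hmem : ∀ q ∈ c, q.s.1.2 = 0 := by
      intro q hq
      rcases q.s.2 with h2 | h2
      · exfalso
        have : (Infl P k m htop).rank q ∈ T := hrank ▸ Finset.mem_image_of_mem _ hq
        exact hT (h2 ▸ this)
      · exact h2
    refine ⟨isChain_image_of c hc _ ?_, ?_, ?_⟩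
    · intro x _ y _ h
      rcases (h : inflProj P k m x < inflProj P k m y ∨ x = y) with h | rfl
      · exact le_of_lt h
      · exact le_refl _
    · rw [Finset.image_image, ← hrank]
      rfl
    · rw [Finset.image_image]
      refine Finset.ext fun p => ?_
      simp only [Finset.mem_image, Function.comp_apply]
      constructor
      · rintro ⟨q, hq, rfl⟩
        have : (⟨⟨(inflProj P k m q, 0), Or.inr rfl⟩⟩ : InflC P k m) = q :=
          infl_ext P k m rfl (hmem q hq).symm
        rw [this]
        exact hq
      · intro hp
        exact ⟨p, hp, infl_ext P k m rfl (hmem p hp).symm⟩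

/-- flag numbers involving rank k+1 are multiplied by m+1 -/
lemma flag_Infl_mem (htop : P.rank P.top ≠ k + 1) (T : Finset ℕ) (hT : k + 1 ∈ T) :
    flagNum (Infl P k m htop) T = (m + 1) * flagNum P T := by
  classical
  rw [flagNum_eq_ncard, flagNum_eq_ncard]
  have key : Nat.card {c : Finset (Infl P k m htop).carrier //
      IsChain (· ≤ ·) (↑c : Set (Infl P k m htop).carrier) ∧
        c.image (Infl P k m htop).rank = T} =
      Nat.card ({c : Finset P.carrier //
        IsChain (· ≤ ·) (↑c : Set P.carrier) ∧ c.image P.rank = T} × Fin (m + 1)) := by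
    apply Nat.card_congr
    -- the map x ↦ element of Infl with index j at level k+1
    set Fj : Fin (m + 1) → P.carrier → InflC P k m := fun j x =>
      ⟨⟨(x, if P.rank x = k + 1 then j else 0), by
        by_cases h : P.rank x = k + 1
        · exact Or.inl h
        · exact Or.inr (if_neg h)⟩⟩
      with hFj
    have hFjproj : ∀ j x, inflProj P k m (Fj j x) = x := fun _ _ => rfl
    have hrankFj : ∀ j x, (Infl P k m htop).rank (Fj j x) = P.rank x := fun _ _ => rfl
    -- uniqueness of the rank-(k+1) element
    have huniq : ∀ c' : {c : Finset (Infl P k m htop).carrier //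
        IsChain (· ≤ ·) (↑c : Set (Infl P k m htop).carrier) ∧
          c.image (Infl P k m htop).rank = T},
        ∃! q, q ∈ c'.1 ∧ (Infl P k m htop).rank q = k + 1 := by
      rintro ⟨c, hc, hrank⟩
      obtain ⟨q, hq, hq2⟩ := Finset.mem_image.1 (hrank.symm ▸ hT)
      exact ⟨q, ⟨hq, hq2⟩, fun q' hq' =>
        chain_rank_unique (Infl P k m htop) hc hq'.1 hq (hq'.2.trans hq2.symm)⟩
    refine ⟨fun c' => ⟨⟨c'.1.image (inflProj P k m), ?_, ?_⟩,
        (c'.1.choose _ (huniq c')).s.1.2⟩,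
      fun cj => ⟨(cj.1.1).image (Fj cj.2), ?_, ?_⟩, ?_, ?_⟩
    · exact isChain_image_of c'.1 c'.2.1 _ (fun x _ y _ h => by
        rcases (h : inflProj P k m x < inflProj P k m y ∨ x = y) with h | rfl
        · exact le_of_lt h
        · exact le_refl _)
    · rw [Finset.image_image]
      exact c'.2.2
    · exact isChain_image_of cj.1.1 cj.1.2.1 _ (fun x _ y _ h => by
        rcases eq_or_lt_of_le h with rfl | h
        · exact le_refl _
        · exact Or.inl h)
    · rw [Finset.image_image]
      exact cj.1.2.2
    · -- left inverse
      rintro ⟨c, hc, hrank⟩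
      have hchoose := Finset.choose_spec (fun q => (Infl P k m htop).rank q = k + 1) c
        (huniq ⟨c, hc, hrank⟩)
      set pivot := c.choose (fun q => (Infl P k m htop).rank q = k + 1)
        (huniq ⟨c, hc, hrank⟩) with hpiv
      refine Subtype.ext ?_
      show (c.image (inflProj P k m)).image (Fj pivot.s.1.2) = c
      rw [Finset.image_image]
      refine Finset.ext fun p => ?_
      simp only [Finset.mem_image, Function.comp_apply]
      constructor
      · rintro ⟨q, hq, rfl⟩
        by_cases hq2 : P.rank q.s.1.1 = k + 1
        · have hqp : q = pivot := chain_rank_unique (Infl P k m htop) hc hq hchoose.1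
            (hq2.trans hchoose.2.symm)
          have he : Fj pivot.s.1.2 (inflProj P k m q) = q := infl_ext P k m rfl (by
            show (if P.rank q.s.1.1 = k + 1 then pivot.s.1.2 else 0) = q.s.1.2
            rw [if_pos hq2, hqp])
          rw [he]; exact hq
        · have hq0 : q.s.1.2 = 0 := q.s.2.resolve_left hq2
          have he : Fj pivot.s.1.2 (inflProj P k m q) = q := infl_ext P k m rfl (by
            show (if P.rank q.s.1.1 = k + 1 then pivot.s.1.2 else 0) = q.s.1.2
            rw [if_neg hq2, hq0])
          rw [he]; exact hq
      · intro hp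
        refine ⟨p, hp, ?_⟩
        by_cases hp2 : P.rank p.s.1.1 = k + 1
        · have hpp : p = pivot := chain_rank_unique (Infl P k m htop) hc hp hchoose.1
            (hp2.trans hchoose.2.symm)
          exact infl_ext P k m rfl (by
            show (if P.rank p.s.1.1 = k + 1 then pivot.s.1.2 else 0) = p.s.1.2
            rw [if_pos hp2, hpp])
        · exact infl_ext P k m rfl (by
            show (if P.rank p.s.1.1 = k + 1 then pivot.s.1.2 else 0) = p.s.1.2
            rw [if_neg hp2, p.s.2.resolve_left hp2])
    · -- right inverse
      rintro ⟨⟨c, hc, hrank⟩, j⟩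
      have hCh : IsChain (· ≤ ·) (↑(c.image (Fj j)) : Set (Infl P k m htop).carrier) :=
        isChain_image_of c hc _ (fun x _ y _ h => by
          rcases eq_or_lt_of_le h with rfl | h
          · exact le_refl _
          · exact Or.inl h)
      have hRk : (c.image (Fj j)).image (Infl P k m htop).rank = T := by
        rw [Finset.image_image]
        exact hrank
      have hGF : (c.image (Fj j)).image (inflProj P k m) = c := by
        rw [Finset.image_image]
        have h0 : ∀ x ∈ c, ((inflProj P k m) ∘ (Fj j)) x = id x := fun x _ => rfl
        rw [Finset.image_congr h0, Finset.image_id]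
      obtain ⟨u, hu, hu2⟩ := Finset.mem_image.1 (hrank.symm ▸ hT)
      have hFju : Fj j u ∈ c.image (Fj j) := Finset.mem_image_of_mem _ hu
      have hchoose := Finset.choose_spec (fun q => (Infl P k m htop).rank q = k + 1)
        (c.image (Fj j)) (huniq ⟨c.image (Fj j), hCh, hRk⟩)
      have hpiv : (c.image (Fj j)).choose (fun q => (Infl P k m htop).rank q = k + 1)
          (huniq ⟨c.image (Fj j), hCh, hRk⟩) = Fj j u :=
        chain_rank_unique (Infl P k m htop) hCh hchoose.1 hFju
          (hchoose.2.trans ((hrankFj j u).trans hu2).symm)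
      refine Prod.ext (Subtype.ext hGF) ?_
      show ((c.image (Fj j)).choose (fun q => (Infl P k m htop).rank q = k + 1) _).s.1.2 = j
      rw [hpiv]
      show (if P.rank u = k + 1 then j else 0) = j
      rw [if_pos hu2]
  rw [key, Nat.card_prod, Nat.card_eq_fintype_card (α := Fin (m+1)), Fintype.card_fin, mul_comm]



lemma flagNum_empty (P : GradedPoset) : flagNum P ∅ = 1 := by
  have : {c : Finset P.carrier |
      IsChain (· ≤ ·) (↑c : Set P.carrier) ∧ c.image P.rank = ∅} = {∅} := by
    ext c
    simp only [Set.mem_setOf_eq, Set.mem_singleton_iff, Finset.image_eq_empty]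
    constructor
    · exact fun h => h.2
    · rintro rfl
      exact ⟨by simp [IsChain], rfl⟩
  rw [flagNum, this, Set.ncard_singleton]

-- ### fat chain posets
variable (n : ℕ) (S : Finset ℕ)

structure FatC (n : ℕ) (S : Finset ℕ) : Type where
  s : {p : Fin (n + 3) × Bool // p.2 = false ∨ (p.1 : ℕ) ∈ S}

instance : Fintype (FatC n S) :=
  Fintype.ofEquiv {p : Fin (n + 3) × Bool // p.2 = false ∨ (p.1 : ℕ) ∈ S}
    ⟨FatC.mk, FatC.s, fun _ => rfl, fun _ => rfl⟩

def fatProj : FatC n S → Fin (n + 3) := fun q => q.s.1.1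

instance : PartialOrder (FatC n S) := projPO (fatProj n S)

lemma fat_lt_iff (p q : FatC n S) : p < q ↔ fatProj n S p < fatProj n S q :=
  projPO_lt_iff (fatProj n S) p q

lemma fat_ext {p q : FatC n S} (h1 : p.s.1.1 = q.s.1.1) (h2 : p.s.1.2 = q.s.1.2) : p = q := by
  cases p; cases q
  congr 1
  exact Subtype.ext (Prod.ext h1 h2)

@[reducible] def Fat (hS : S ⊆ Finset.Icc 1 (n + 1)) : GradedPoset where
  carrier := FatC n S
  bot := ⟨⟨(0, false), Or.inl rfl⟩⟩
  top := ⟨⟨(Fin.last (n + 2), false), Or.inl rfl⟩⟩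
  bot_le q := by
    rcases eq_or_lt_of_le (Fin.zero_le q.s.1.1) with h | h
    · refine Or.inr ((fat_ext n S h.symm ?_).symm)
      rcases q.s.2 with h2 | h2
      · exact h2
      · exfalso
        have hmem := hS h2
        rw [← h] at hmem
        simp [Finset.mem_Icc] at hmem
    · exact Or.inl h
  le_top q := by
    rcases eq_or_lt_of_le (Fin.le_last (q.s.1.1)) with h | h
    · refine Or.inr (fat_ext n S h ?_)
      rcases q.s.2 with h2 | h2
      · exact h2
      · exfalso
        have h3 := hS h2
        rw [h] at h3
        simp only [Fin.val_last, Finset.mem_Icc] at h3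
        omega
    · exact Or.inl h
  rank q := (q.s.1.1 : ℕ)
  rank_bot := rfl
  rank_covBy := by
    intro p q hcov
    show (q.s.1.1 : ℕ) = (p.s.1.1 : ℕ) + 1
    have hlt : p.s.1.1 < q.s.1.1 := (fat_lt_iff n S p q).1 hcov.lt
    by_contra hne
    have hval : (p.s.1.1 : ℕ) + 1 < (q.s.1.1 : ℕ) := by
      have := (Fin.lt_iff_val_lt_val).1 hlt
      omega
    have hmidlt : ((p.s.1.1 : ℕ) + 1) < n + 3 := lt_trans hval (q.s.1.1).2
    set mid : FatC n S := ⟨⟨(⟨(p.s.1.1 : ℕ) + 1, hmidlt⟩, false), Or.inl rfl⟩⟩ with hmid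
    refine hcov.2 ((fat_lt_iff n S p mid).2 ?_) ((fat_lt_iff n S mid q).2 ?_)
    · exact Fin.lt_iff_val_lt_val.2 (Nat.lt_succ_self _)
    · exact Fin.lt_iff_val_lt_val.2 hval

lemma rank_Fat_top (hS : S ⊆ Finset.Icc 1 (n + 1)) :
    (Fat n S hS).rank (Fat n S hS).top = n + 2 := by
  show ((Fin.last (n + 2) : Fin (n + 3)) : ℕ) = n + 2
  simp

/-- the number of elements of rank t -/
lemma fat_level_card (hS : S ⊆ Finset.Icc 1 (n + 1)) (t : ℕ) (ht : t < n + 3) :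
    Nat.card {x : FatC n S // (Fat n S hS).rank x = t} = if t ∈ S then 2 else 1 := by
  by_cases hts : t ∈ S
  · rw [if_pos hts]
    have e : {x : FatC n S // (Fat n S hS).rank x = t} ≃ Bool := by
      refine ⟨fun x => x.1.s.1.2, fun b => ⟨⟨⟨(⟨t, ht⟩, b), Or.inr hts⟩⟩, rfl⟩, ?_, ?_⟩
      · rintro ⟨x, hx⟩
        refine Subtype.ext (fat_ext n S ?_ rfl)
        exact (Fin.ext (by exact hx)).symm
      · intro b
        rfl
    rw [Nat.card_congr e]
    simp
  · rw [if_neg hts]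
    have e : {x : FatC n S // (Fat n S hS).rank x = t} ≃ Unit := by
      refine ⟨fun _ => Unit.unit, fun _ => ⟨⟨⟨(⟨t, ht⟩, false), Or.inl rfl⟩⟩, rfl⟩, ?_, ?_⟩
      · rintro ⟨x, hx⟩
        refine Subtype.ext (fat_ext n S ?_ ?_)
        · exact (Fin.ext (by exact hx)).symm
        · rcases x.s.2 with h2 | h2
          · exact h2.symm
          · exact absurd (hx ▸ h2) hts
      · intro u
        rfl
    rw [Nat.card_congr e]
    simp
  done

/-- chains in the fat chain: extraction of one level -/
lemma fat_count_insert (hS : S ⊆ Finset.Icc 1 (n + 1)) (t : ℕ) (ht : t < n + 3)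
    (T : Finset ℕ) (htT : t ∉ T) :
    flagNum (Fat n S hS) (insert t T) =
      (if t ∈ S then 2 else 1) * flagNum (Fat n S hS) T := by
  rw [flagNum_eq_ncard, flagNum_eq_ncard, ← fat_level_card n S hS t ht, ← Nat.card_prod]
  apply Nat.card_congr
  set FP := Fat n S hS with hFP
  have huniq : ∀ c : Finset FP.carrier, IsChain (· ≤ ·) (↑c : Set FP.carrier) →
      c.image FP.rank = insert t T → ∃! q, q ∈ c ∧ FP.rank q = t := by
    intro c hc hrank
    obtain ⟨q, hq, hq2⟩ := Finset.mem_image.1 (hrank.symm ▸ Finset.mem_insert_self t T)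
    exact ⟨q, ⟨hq, hq2⟩, fun q' hq' => chain_rank_unique FP hc hq'.1 hq (hq'.2.trans hq2.symm)⟩
  refine ⟨fun c => ⟨⟨c.1.choose (fun q => FP.rank q = t) (huniq c.1 c.2.1 c.2.2),
      (Finset.choose_spec (fun q => FP.rank q = t) c.1 (huniq c.1 c.2.1 c.2.2)).2⟩,
    ⟨c.1.filter (fun x => FP.rank x ≠ t), ?_, ?_⟩⟩,
    fun zc => ⟨insert zc.1.1 zc.2.1, ?_, ?_⟩, ?_, ?_⟩
  · exact IsChain.mono (by exact_mod_cast Finset.filter_subset _ c.1) c.2.1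
  · -- image of filtered chain
    refine Finset.ext fun r => ?_
    simp only [Finset.mem_image, Finset.mem_filter]
    constructor
    · rintro ⟨x, ⟨hx, hxt⟩, rfl⟩
      have : FP.rank x ∈ insert t T := c.2.2 ▸ Finset.mem_image_of_mem _ hx
      exact (Finset.mem_insert.1 this).resolve_left hxt
    · intro hr
      have : r ∈ insert t T := Finset.mem_insert_of_mem hr
      obtain ⟨x, hx, hx2⟩ := Finset.mem_image.1 (c.2.2.symm ▸ this)
      exact ⟨x, ⟨hx, fun h => htT ((hx2.symm.trans h) ▸ hr)⟩, hx2⟩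
  · -- chain after insert
    rw [Finset.coe_insert]
    refine IsChain.insert zc.2.2.1 (fun b hb hne => ?_)
    have hbT : FP.rank b ∈ T := zc.2.2.2 ▸ Finset.mem_image_of_mem _ hb
    have hzb : FP.rank zc.1.1 ≠ FP.rank b := by
      rw [zc.1.2]
      rintro h
      exact htT (h ▸ hbT)
    rcases lt_or_gt_of_ne (fun h : fatProj n S zc.1.1 = fatProj n S b => hzb (by
        show (zc.1.1.s.1.1 : ℕ) = (b.s.1.1 : ℕ)
        exact congrArg Fin.val h)) with h | h
    · exact Or.inl (Or.inl h)
    · exact Or.inr (Or.inl h)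
  · -- image after insert
    rw [Finset.image_insert, zc.2.2.2, zc.1.2]
  · -- left inverse
    rintro ⟨c, hc, hrank⟩
    have hchoose := Finset.choose_spec (fun q => FP.rank q = t) c (huniq c hc hrank)
    refine Subtype.ext ?_
    show insert (c.choose (fun q => FP.rank q = t) (huniq c hc hrank))
      (c.filter (fun x => FP.rank x ≠ t)) = c
    refine Finset.ext fun x => ?_
    simp only [Finset.mem_insert, Finset.mem_filter]
    constructor
    · rintro (rfl | ⟨hx, _⟩)
      · exact hchoose.1
      · exact hx
    · intro hx
      by_cases hxt : FP.rank x = t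
      · exact Or.inl (chain_rank_unique FP hc hx hchoose.1 (hxt.trans hchoose.2.symm))
      · exact Or.inr ⟨hx, hxt⟩
  · -- right inverse
    rintro ⟨⟨z, hz⟩, ⟨c, hc, hrank⟩⟩
    have hchain : IsChain (· ≤ ·) (↑(insert z c) : Set FP.carrier) := by
      rw [Finset.coe_insert]
      refine IsChain.insert hc (fun b hb hne => ?_)
      have hbT : FP.rank b ∈ T := hrank ▸ Finset.mem_image_of_mem _ hb
      have hzb : FP.rank z ≠ FP.rank b := by
        rw [hz]
        rintro h
        exact htT (h ▸ hbT)
      rcases lt_or_gt_of_ne (fun h : fatProj n S z = fatProj n S b => hzb (by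
          show (z.s.1.1 : ℕ) = (b.s.1.1 : ℕ)
          exact congrArg Fin.val h)) with h | h
      · exact Or.inl (Or.inl h)
      · exact Or.inr (Or.inl h)
    have himg : (insert z c).image FP.rank = insert t T := by
      rw [Finset.image_insert, hrank, hz]
    have hchoose := Finset.choose_spec (fun q => FP.rank q = t) (insert z c)
      (huniq (insert z c) hchain himg)
    refine Prod.ext (Subtype.ext ?_) (Subtype.ext ?_)
    · exact chain_rank_unique FP hchain hchoose.1 (Finset.mem_insert_self z c)
        (hchoose.2.trans hz.symm)
    · show (insert z c).filter (fun x => FP.rank x ≠ t) = c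
      refine Finset.ext fun x => ?_
      simp only [Finset.mem_filter, Finset.mem_insert]
      constructor
      · rintro ⟨rfl | hx, hxt⟩
        · exact absurd hz hxt
        · exact hx
      · intro hx
        refine ⟨Or.inr hx, ?_⟩
        have : FP.rank x ∈ T := hrank ▸ Finset.mem_image_of_mem _ hx
        rintro h
        exact htT (h ▸ this)

lemma flag_Fat (hS : S ⊆ Finset.Icc 1 (n + 1)) (T : Finset ℕ)
    (hT : T ⊆ Finset.Icc 1 (n + 1)) :
    flagNum (Fat n S hS) T = 2 ^ (T ∩ S).card := by
  classical
  revert hT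
  refine Finset.induction_on T ?_ ?_
  · intro _
    rw [flagNum_empty]
    simp
  · intro t T' htT' ih hins
    have ht : t < n + 3 := by
      have := hins (Finset.mem_insert_self t T')
      rw [Finset.mem_Icc] at this
      omega
    rw [fat_count_insert n S hS t ht T' htT', ih (fun x hx => hins (Finset.mem_insert_of_mem hx))]
    by_cases htS : t ∈ S
    · rw [if_pos htS, Finset.insert_inter_of_mem htS, Finset.card_insert_of_notMem
        (fun h => htT' (Finset.mem_of_mem_inter_left h)), pow_succ, mul_comm]
    · rw [if_neg htS, one_mul, Finset.insert_inter_of_notMem htS]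




lemma rank_Del_top (P : GradedPoset) (k : ℕ) (htop : P.rank P.top ≠ k + 1)
    (hgt : k < P.rank P.top) :
    (Del P k htop).rank (Del P k htop).top = P.rank P.top - 1 := by
  show (if P.rank P.top ≤ k then P.rank P.top else P.rank P.top - 1) = P.rank P.top - 1
  rw [if_neg (by omega)]

end GradedPoset


-- ######################## ASSEMBLY ########################
open GradedPoset

section Assembly
variable {n k : ℕ}

lemma image_sigma_subset (hk1 : 1 ≤ k) (hkn : k ≤ n) {S : Finset ℕ}
    (hS : S ⊆ Finset.Icc 1 n) : S.image (sigmaF k) ⊆ Finset.Icc 1 (n + 1) := by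
  intro j hj
  obtain ⟨i, hi, rfl⟩ := Finset.mem_image.1 hj
  have := Finset.mem_Icc.1 (hS hi)
  simp only [sigmaF, Finset.mem_Icc]
  split <;> omega

lemma not_mem_image_sigma (k : ℕ) (S : Finset ℕ) : k + 1 ∉ S.image (sigmaF k) := by
  intro h
  obtain ⟨i, _, hi⟩ := Finset.mem_image.1 h
  exact sigma_ne k i hi

lemma image_tau_subset (hk1 : 1 ≤ k) (hkn : k ≤ n) {T : Finset ℕ}
    (hT : T ⊆ Finset.Icc 1 (n + 1)) (hT2 : k + 1 ∉ T) :
    T.image (tauF k) ⊆ Finset.Icc 1 n := by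
  intro j hj
  obtain ⟨i, hi, rfl⟩ := Finset.mem_image.1 hj
  have h1 := Finset.mem_Icc.1 (hT hi)
  have h2 : i ≠ k + 1 := fun h => hT2 (h ▸ hi)
  simp only [tauF, Finset.mem_Icc]
  split <;> omega

lemma image_tau_sigma (k : ℕ) (S : Finset ℕ) :
    (S.image (sigmaF k)).image (tauF k) = S := by
  rw [Finset.image_image]
  refine Eq.trans (Finset.image_congr fun i _ => tau_sigma k i) ?_
  simp

lemma image_sigma_tau (k : ℕ) {T : Finset ℕ} (hT2 : k + 1 ∉ T) :
    (T.image (tauF k)).image (sigmaF k) = T := by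
  rw [Finset.image_image]
  refine Eq.trans (Finset.image_congr fun i hi => sigma_tau k (fun h => hT2 (h ▸ hi))) ?_
  simp

lemma lift_apply_mem (a : Finset ℕ → ℝ) {T : Finset ℕ}
    (hT : T ⊆ Finset.Icc 1 (n + 1)) (hT2 : k + 1 ∉ T) :
    lift n k a T = a (T.image (tauF k)) := if_pos ⟨hT, hT2⟩

lemma lift_apply_not (a : Finset ℕ → ℝ) {T : Finset ℕ}
    (h : ¬(T ⊆ Finset.Icc 1 (n + 1) ∧ k + 1 ∉ T)) : lift n k a T = 0 := if_neg h

lemma lift_sigma (hk1 : 1 ≤ k) (hkn : k ≤ n) (a : Finset ℕ → ℝ) {S : Finset ℕ}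
    (hS : S ⊆ Finset.Icc 1 n) : lift n k a (S.image (sigmaF k)) = a S := by
  rw [lift_apply_mem a (image_sigma_subset hk1 hkn hS) (not_mem_image_sigma k S),
    image_tau_sigma]

lemma lift_add (a b : Finset ℕ → ℝ) : lift n k (a + b) = lift n k a + lift n k b := by
  funext T
  simp only [lift, Pi.add_apply]
  split
  · rfl
  · rw [add_zero]

lemma lift_smul (c : ℝ) (a : Finset ℕ → ℝ) : lift n k (c • a) = c • lift n k a := by
  funext T
  simp only [lift, Pi.smul_apply, smul_eq_mul]
  split
  · rfl
  · rw [mul_zero]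

lemma lift_inj (hk1 : 1 ≤ k) (hkn : k ≤ n) {a b : Finset ℕ → ℝ}
    (ha : ∀ S : Finset ℕ, ¬ S ⊆ Finset.Icc 1 n → a S = 0)
    (hb : ∀ S : Finset ℕ, ¬ S ⊆ Finset.Icc 1 n → b S = 0)
    (h : lift n k a = lift n k b) : a = b := by
  funext S
  by_cases hS : S ⊆ Finset.Icc 1 n
  · rw [← lift_sigma hk1 hkn a hS, ← lift_sigma hk1 hkn b hS, h]
  · rw [ha S hS, hb S hS]

/-- splitting/reindexing the big sum -/
lemma sum_split (hk1 : 1 ≤ k) (hkn : k ≤ n) (b f : Finset ℕ → ℝ)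
    (hb : ∀ T, T ⊆ Finset.Icc 1 (n + 1) → k + 1 ∈ T → b T = 0) :
    ∑ T ∈ (Finset.Icc 1 (n + 1)).powerset, b T * f T
      = ∑ S ∈ (Finset.Icc 1 n).powerset,
          b (S.image (sigmaF k)) * f (S.image (sigmaF k)) := by
  classical
  rw [← Finset.sum_filter_add_sum_filter_not ((Finset.Icc 1 (n + 1)).powerset)
    (fun T => k + 1 ∈ T)]
  have h1 : ∑ T ∈ ((Finset.Icc 1 (n + 1)).powerset).filter (fun T => k + 1 ∈ T),
      b T * f T = 0 := by
    refine Finset.sum_eq_zero fun T hT => ?_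
    rw [Finset.mem_filter, Finset.mem_powerset] at hT
    rw [hb T hT.1 hT.2, zero_mul]
  rw [h1, zero_add]
  refine Finset.sum_nbij' (i := fun T => T.image (tauF k)) (j := fun S => S.image (sigmaF k))
    ?_ ?_ ?_ ?_ ?_
  · intro T hT
    rw [Finset.mem_filter, Finset.mem_powerset] at hT
    exact Finset.mem_powerset.2 (image_tau_subset hk1 hkn hT.1 hT.2)
  · intro S hS
    rw [Finset.mem_powerset] at hS
    rw [Finset.mem_filter, Finset.mem_powerset]
    exact ⟨image_sigma_subset hk1 hkn hS, not_mem_image_sigma k S⟩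
  · intro T hT
    rw [Finset.mem_filter] at hT
    exact image_sigma_tau k hT.2
  · intro S _
    exact image_tau_sigma k S
  · intro T hT
    rw [Finset.mem_filter] at hT
    rw [image_sigma_tau k hT.2]

lemma icc_n2 (n : ℕ) : Finset.Icc 1 (n + 2 - 1) = Finset.Icc 1 (n + 1) := by norm_num
lemma icc_n1 (n : ℕ) : Finset.Icc 1 (n + 1 - 1) = Finset.Icc 1 n := by norm_num

/-- membership in coneK (n+2), unfolded -/
lemma mem_coneK2_iff (x : Finset ℕ → ℝ) : x ∈ coneK (n + 2) ↔
    (∀ T : Finset ℕ, ¬ T ⊆ Finset.Icc 1 (n + 1) → x T = 0) ∧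
      ∀ P : GradedPoset, P.rank P.top = n + 2 →
        0 ≤ ∑ T ∈ (Finset.Icc 1 (n + 1)).powerset, x T * (flagNum P T : ℝ) := by
  rw [coneK, Set.mem_setOf_eq, icc_n2]

lemma mem_coneK1_iff (a : Finset ℕ → ℝ) : a ∈ coneK (n + 1) ↔
    (∀ S : Finset ℕ, ¬ S ⊆ Finset.Icc 1 n → a S = 0) ∧
      ∀ Q : GradedPoset, Q.rank Q.top = n + 1 →
        0 ≤ ∑ S ∈ (Finset.Icc 1 n).powerset, a S * (flagNum Q S : ℝ) := by
  rw [coneK, Set.mem_setOf_eq, icc_n1]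

/-- Part 1: the lift maps the cone into the cone. -/
lemma lift_mem_coneK (hk1 : 1 ≤ k) (hkn : k ≤ n) {a : Finset ℕ → ℝ}
    (ha : a ∈ coneK (n + 1)) : lift n k a ∈ coneK (n + 2) := by
  rw [mem_coneK1_iff] at ha
  rw [mem_coneK2_iff]
  constructor
  · intro T hT
    exact lift_apply_not a (fun h => hT h.1)
  · intro P hP
    have htop : P.rank P.top ≠ k + 1 := by omega
    have hsplit := sum_split hk1 hkn (lift n k a) (fun T => (flagNum P T : ℝ))
      (fun T h1 h2 => lift_apply_not a (fun h => h.2 h2))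
    rw [hsplit]
    have hpos := ha.2 (Del P k htop) (by rw [rank_Del_top P k htop (by omega)]; omega)
    calc (0:ℝ) ≤ ∑ S ∈ (Finset.Icc 1 n).powerset,
          a S * (flagNum (Del P k htop) S : ℝ) := hpos
      _ = _ := by
          refine Finset.sum_congr rfl fun S hS => ?_
          rw [Finset.mem_powerset] at hS
          show a S * (flagNum (Del P k htop) S : ℝ)
            = lift n k a (S.image (sigmaF k)) * (flagNum P (S.image (sigmaF k)) : ℝ)
          rw [lift_sigma hk1 hkn a hS, flag_Del P k htop S]

/-- positivity transfer back via Dup -/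
lemma mem_coneK_of_lift (hk1 : 1 ≤ k) (hkn : k ≤ n) {a : Finset ℕ → ℝ}
    (hsupp : ∀ S : Finset ℕ, ¬ S ⊆ Finset.Icc 1 n → a S = 0)
    (h : lift n k a ∈ coneK (n + 2)) : a ∈ coneK (n + 1) := by
  rw [mem_coneK2_iff] at h
  rw [mem_coneK1_iff]
  refine ⟨hsupp, fun Q hQ => ?_⟩
  have hktop : k < Q.rank Q.top := by omega
  have hpos := h.2 (Dup Q k hktop) (by rw [rank_Dup_top]; omega)
  have hsplit := sum_split hk1 hkn (lift n k a)
    (fun T => (flagNum (Dup Q k hktop) T : ℝ))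
    (fun T h1 h2 => lift_apply_not a (fun h => h.2 h2))
  rw [hsplit] at hpos
  calc (0:ℝ) ≤ _ := hpos
    _ = ∑ S ∈ (Finset.Icc 1 n).powerset, a S * (flagNum Q S : ℝ) := by
        refine Finset.sum_congr rfl fun S hS => ?_
        rw [Finset.mem_powerset] at hS
        show lift n k a (S.image (sigmaF k)) * (flagNum (Dup Q k hktop) (S.image (sigmaF k)) : ℝ)
          = a S * (flagNum Q S : ℝ)
        rw [lift_sigma hk1 hkn a hS, ← flag_Dup Q k hktop S]

/-- key: the rank-(k+1) coordinates of two cone members summing into the image vanish -/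
lemma face_coord_zero (hk1 : 1 ≤ k) (hkn : k ≤ n) {x y : Finset ℕ → ℝ}
    (hx : x ∈ coneK (n + 2)) (hy : y ∈ coneK (n + 2))
    (h0 : ∀ T, T ⊆ Finset.Icc 1 (n + 1) → k + 1 ∈ T → x T + y T = 0) :
    ∀ T, k + 1 ∈ T → x T = 0 := by
  classical
  rw [mem_coneK2_iff] at hx hy
  -- B functional
  set Bf : (Finset ℕ → ℝ) → GradedPoset → ℝ := fun w P =>
    ∑ T ∈ (Finset.Icc 1 (n + 1)).powerset,
      (if k + 1 ∈ T then w T else 0) * (flagNum P T : ℝ) with hBf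
  have hBnonneg : ∀ (w : Finset ℕ → ℝ),
      ((∀ T : Finset ℕ, ¬ T ⊆ Finset.Icc 1 (n + 1) → w T = 0) ∧
        ∀ P : GradedPoset, P.rank P.top = n + 2 →
          0 ≤ ∑ T ∈ (Finset.Icc 1 (n + 1)).powerset, w T * (flagNum P T : ℝ)) →
      ∀ P : GradedPoset, P.rank P.top = n + 2 → 0 ≤ Bf w P := by
    intro w hw P hP
    have htop : P.rank P.top ≠ k + 1 := by omega
    set Af : ℝ := ∑ T ∈ (Finset.Icc 1 (n + 1)).powerset,
      (if k + 1 ∈ T then 0 else w T) * (flagNum P T : ℝ) with hAf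
    have key : ∀ m : ℕ,
        ∑ T ∈ (Finset.Icc 1 (n + 1)).powerset,
          w T * (flagNum (Infl P k m htop) T : ℝ) = Af + (m + 1 : ℝ) * Bf w P := by
      intro m
      rw [hAf, hBf, Finset.mul_sum, ← Finset.sum_add_distrib]
      refine Finset.sum_congr rfl fun T _ => ?_
      by_cases hT : k + 1 ∈ T
      · rw [if_pos hT, if_pos hT, flag_Infl_mem P k m htop T hT]
        push_cast
        ring
      · rw [if_neg hT, if_neg hT, ← flag_Infl_not_mem P k m htop T hT]
        ring
    have hpos : ∀ m : ℕ, 0 ≤ Af + (m + 1 : ℝ) * Bf w P := by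
      intro m
      rw [← key m]
      exact hw.2 (Infl P k m htop) (by rw [rank_Infl_top]; omega)
    by_contra hneg
    push_neg at hneg
    obtain ⟨m, hm⟩ := exists_nat_gt (Af / (-Bf w P))
    rw [div_lt_iff₀ (by linarith)] at hm
    have := hpos m
    nlinarith
  have hBx := hBnonneg x hx
  have hBy := hBnonneg y hy
  have hBsum : ∀ P : GradedPoset, P.rank P.top = n + 2 → Bf x P + Bf y P = 0 := by
    intro P hP
    rw [hBf, ← Finset.sum_add_distrib]
    refine Finset.sum_eq_zero fun T hT => ?_
    rw [Finset.mem_powerset] at hT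
    by_cases h : k + 1 ∈ T
    · rw [if_pos h, if_pos h, ← add_mul, h0 T hT h, zero_mul]
    · rw [if_neg h, if_neg h]
      simp
  have hBzero : ∀ P : GradedPoset, P.rank P.top = n + 2 → Bf x P = 0 := by
    intro P hP
    have h1 := hBx P hP
    have h2 := hBy P hP
    have h3 := hBsum P hP
    linarith
  -- evaluate on fat chains and invert
  have hz : ∀ T ∈ (Finset.Icc 1 (n + 1)).powerset,
      (if k + 1 ∈ T then x T else 0) = 0 := by
    refine inversion (Finset.Icc 1 (n + 1)) (fun T => if k + 1 ∈ T then x T else 0) ?_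
    intro S hS
    rw [Finset.mem_powerset] at hS
    have hfat := hBzero (Fat n S hS) (rank_Fat_top n S hS)
    calc ∑ T ∈ (Finset.Icc 1 (n + 1)).powerset,
          (if k + 1 ∈ T then x T else 0) * 2 ^ (T ∩ S).card
        = Bf x (Fat n S hS) := by
          rw [hBf]
          refine Finset.sum_congr rfl fun T hT => ?_
          rw [Finset.mem_powerset] at hT
          rw [flag_Fat n S hS T hT]
          push_cast
          ring
      _ = 0 := hfat
  intro T hT
  by_cases hsub : T ⊆ Finset.Icc 1 (n + 1)
  · have := hz T (Finset.mem_powerset.2 hsub)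
    rwa [if_pos hT] at this
  · exact hx.1 T hsub

/-- a cone member with vanishing rank-(k+1) coordinates is in the image of the lift -/
lemma mem_image_of_coord_zero (hk1 : 1 ≤ k) (hkn : k ≤ n) {x : Finset ℕ → ℝ}
    (hx : x ∈ coneK (n + 2)) (hx0 : ∀ T, k + 1 ∈ T → x T = 0) :
    x ∈ lift n k '' coneK (n + 1) := by
  classical
  set a : Finset ℕ → ℝ := fun S =>
    if S ⊆ Finset.Icc 1 n then x (S.image (sigmaF k)) else 0 with ha
  have hlift : lift n k a = x := by
    funext T
    by_cases hc : T ⊆ Finset.Icc 1 (n + 1) ∧ k + 1 ∉ T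
    · rw [lift_apply_mem a hc.1 hc.2, ha]
      simp only
      rw [if_pos (image_tau_subset hk1 hkn hc.1 hc.2), image_sigma_tau k hc.2]
    · rw [lift_apply_not a hc]
      push_neg at hc
      by_cases hsub : T ⊆ Finset.Icc 1 (n + 1)
      · exact (hx0 T (hc hsub)).symm
      · exact ((mem_coneK2_iff x).1 hx).1 T hsub |>.symm
  refine ⟨a, ?_, hlift⟩
  refine mem_coneK_of_lift hk1 hkn ?_ (hlift ▸ hx)
  intro S hS
  rw [ha]
  simp only
  rw [if_neg hS]

end Assembly

lemma lift_zero {n k : ℕ} : lift n k (0 : Finset ℕ → ℝ) = 0 := by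
  funext T
  simp only [lift]
  split <;> rfl

lemma coneK1_support {n : ℕ} {g : Finset ℕ → ℝ} (hg : g ∈ coneK (n + 1)) :
    ∀ S : Finset ℕ, ¬ S ⊆ Finset.Icc 1 n → g S = 0 := ((mem_coneK1_iff g).1 hg).1

theorem stmt_17 (n k : ℕ) (hn : 1 ≤ n) (hk1 : 1 ≤ k) (hkn : k ≤ n) :
    (∀ a ∈ coneK (n + 1), lift n k a ∈ coneK (n + 2)) ∧
    (∀ x y : Finset ℕ → ℝ, x ∈ coneK (n + 2) → y ∈ coneK (n + 2) →
        x + y ∈ lift n k '' coneK (n + 1) →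
        x ∈ lift n k '' coneK (n + 1) ∧ y ∈ lift n k '' coneK (n + 1)) ∧
    ∀ a : Finset ℕ → ℝ, (∀ S : Finset ℕ, ¬ S ⊆ Finset.Icc 1 n → a S = 0) →
      ((a ∈ coneK (n + 1) ↔ lift n k a ∈ coneK (n + 2)) ∧
        (IsExtremeRay (coneK (n + 1)) a ↔ IsExtremeRay (coneK (n + 2)) (lift n k a))) := by
  have hface : ∀ x y : Finset ℕ → ℝ, x ∈ coneK (n + 2) → y ∈ coneK (n + 2) →
      x + y ∈ lift n k '' coneK (n + 1) →
      x ∈ lift n k '' coneK (n + 1) ∧ y ∈ lift n k '' coneK (n + 1) := by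
    rintro x y hx hy ⟨a0, _, hsum⟩
    have h0 : ∀ T, T ⊆ Finset.Icc 1 (n + 1) → k + 1 ∈ T → x T + y T = 0 := by
      intro T h1 h2
      have hz : lift n k a0 T = 0 := lift_apply_not a0 (fun hc => hc.2 h2)
      have : (x + y) T = 0 := by rw [← hsum]; exact hz
      exact this
    have hx0 := face_coord_zero hk1 hkn hx hy h0
    have hy0 := face_coord_zero hk1 hkn hy hx
      (fun T h1 h2 => by rw [add_comm]; exact h0 T h1 h2)
    exact ⟨mem_image_of_coord_zero hk1 hkn hx hx0,
      mem_image_of_coord_zero hk1 hkn hy hy0⟩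
  refine ⟨fun a ha => lift_mem_coneK hk1 hkn ha, hface, ?_⟩
  intro a hsupp
  have hiff : a ∈ coneK (n + 1) ↔ lift n k a ∈ coneK (n + 2) :=
    ⟨lift_mem_coneK hk1 hkn, mem_coneK_of_lift hk1 hkn hsupp⟩
  refine ⟨hiff, ?_, ?_⟩
  · rintro ⟨haK, hane, hext⟩
    refine ⟨hiff.1 haK, ?_, ?_⟩
    · intro h
      exact hane (lift_inj hk1 hkn hsupp (fun S _ => rfl) (h.trans lift_zero.symm))
    · intro G H hG hH hsumGH
      have himg : G + H ∈ lift n k '' coneK (n + 1) := ⟨a, haK, hsumGH⟩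
      obtain ⟨hGim, hHim⟩ := hface G H hG hH himg
      obtain ⟨g, hgK, hgl⟩ := hGim
      obtain ⟨h', hhK, hhl⟩ := hHim
      have hgh_supp : ∀ S : Finset ℕ, ¬ S ⊆ Finset.Icc 1 n → (g + h') S = 0 := by
        intro S hS
        show g S + h' S = 0
        rw [coneK1_support hgK S hS, coneK1_support hhK S hS, add_zero]
      have hagh : a = g + h' := by
        refine lift_inj hk1 hkn hsupp hgh_supp ?_
        rw [lift_add, hgl, hhl, hsumGH]
      obtain ⟨⟨c1, hc1, hg_eq⟩, ⟨c2, hc2, hh_eq⟩⟩ := hext g h' hgK hhK hagh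
      refine ⟨⟨c1, hc1, ?_⟩, ⟨c2, hc2, ?_⟩⟩
      · rw [← hgl, hg_eq, lift_smul]
      · rw [← hhl, hh_eq, lift_smul]
  · rintro ⟨hlK, hlne, hext⟩
    refine ⟨hiff.2 hlK, ?_, ?_⟩
    · rintro rfl
      exact hlne lift_zero
    · intro g h' hgK hhK hagh
      have h1 : lift n k a = lift n k g + lift n k h' := by rw [hagh, lift_add]
      obtain ⟨⟨c1, hc1, hG⟩, ⟨c2, hc2, hH⟩⟩ := hext (lift n k g) (lift n k h')
        (lift_mem_coneK hk1 hkn hgK) (lift_mem_coneK hk1 hkn hhK) h1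
      have hca_supp : ∀ (c : ℝ), ∀ S : Finset ℕ, ¬ S ⊆ Finset.Icc 1 n → (c • a) S = 0 := by
        intro c S hS
        show c * a S = 0
        rw [hsupp S hS, mul_zero]
      refine ⟨⟨c1, hc1, ?_⟩, ⟨c2, hc2, ?_⟩⟩
      · refine lift_inj hk1 hkn (coneK1_support hgK) (hca_supp c1) ?_
        rw [hG, ← lift_smul]
      · refine lift_inj hk1 hkn (coneK1_support hhK) (hca_supp c2) ?_
        rw [hH, ← lift_smul]
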